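/- Let T be a finite tree. Then the family of edge sets of subtrees of T is a convex geometry on the edge set E(T), and every rooted circuit (X, e) of this convex geometry satisfies |X| = 2. -/

import Mathlib

open Set

variable {α : Type*}

/-- A closure system on a ground set `E`: a family of subsets of `E` containing `E`
and closed under pairwise intersection. -/
def IsClosureSystem (E : Set α) (K : Set (Set α)) : Prop :=
  (∀ A ∈ K, A ⊆ E) ∧ E ∈ K ∧ ∀ A ∈ K, ∀ B ∈ K, A ∩ B ∈ K

/-- The closure operator `τ(X) = ⋂ {A ∈ K : X ⊆ A}`. -/
def closureOp (K : Set (Set α)) (X : Set α) : Set α :=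
  ⋂₀ {A | A ∈ K ∧ X ⊆ A}

/-- The extreme operator `ex(X) = {x ∈ X : x ∉ τ(X \ {x})}`. -/
def extremeOp (K : Set (Set α)) (X : Set α) : Set α :=
  {x | x ∈ X ∧ x ∉ closureOp K (X \ {x})}

/-- A rooted circuit `(X, e)` of a closure system `K` on ground set `E`:
`e ∉ X` and `X` is minimal under inclusion with `e ∈ τ(X)`. -/
def IsRootedCircuit (E : Set α) (K : Set (Set α)) (X : Set α) (e : α) : Prop :=
  X ⊆ E ∧ e ∈ E ∧ e ∉ X ∧ e ∈ closureOp K X ∧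
    ∀ Y ⊆ X, e ∈ closureOp K Y → Y = X

/-- A convex geometry: a closure system in which every nonempty closed set has a
nonempty extreme set. -/
def IsConvexGeometry (E : Set α) (K : Set (Set α)) : Prop :=
  IsClosureSystem E K ∧ ∀ X ∈ K, X.Nonempty → (extremeOp K X).Nonempty

/-- A convex geometry has stem size 2 if every rooted circuit has stem of size 2. -/
def StemSize2 (E : Set α) (K : Set (Set α)) : Prop :=
  ∀ X e, IsRootedCircuit E K X e → X.ncard = 2

/-- `F` is the edge set of a subtree (connected subgraph) of `G`, where the empty
set is included. -/
def IsSubtreeEdgeSet {V : Type*} (G : SimpleGraph V) (F : Set (Sym2 V)) : Prop :=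
  F = ∅ ∨ ∃ H : G.Subgraph, H.Connected ∧ H.edgeSet = F

/-- The edge-shelling convex geometry of a graph: the family of edge sets of subtrees. -/
def edgeShelling {V : Type*} (G : SimpleGraph V) : Set (Set (Sym2 V)) :=
  {F | IsSubtreeEdgeSet G F}


open Set SimpleGraph

namespace TreeCG

variable {V : Type*} [DecidableEq V] {G : SimpleGraph V}

/-- The unique path between two vertices of a tree. -/
noncomputable def tpath (hG : G.IsTree) (u v : V) : G.Walk u v :=
  (hG.existsUnique_path u v).exists.choose

lemma tpath_isPath (hG : G.IsTree) (u v : V) : (tpath hG u v).IsPath :=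
  (hG.existsUnique_path u v).exists.choose_spec

lemma tpath_unique (hG : G.IsTree) {u v : V} {p : G.Walk u v} (hp : p.IsPath) :
    p = tpath hG u v :=
  (hG.existsUnique_path u v).unique hp (tpath_isPath hG u v)

lemma tpath_self (hG : G.IsTree) (u : V) : tpath hG u u = Walk.nil :=
  (tpath_unique hG Walk.IsPath.nil).symm

lemma tpath_adj (hG : G.IsTree) {u v : V} (h : G.Adj u v) :
    tpath hG u v = Walk.cons h Walk.nil :=
  (tpath_unique hG (by simp [Walk.cons_isPath_iff, h.ne])).symm

lemma edges_tpath_subset (hG : G.IsTree) {u v : V} (p : G.Walk u v) :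
    (tpath hG u v).edges ⊆ p.edges := by
  have h := tpath_unique hG p.bypass_isPath
  rw [← h]
  exact p.edges_bypass_subset

lemma length_le_of_mem_support (hG : G.IsTree) {r v w : V}
    (hm : v ∈ (tpath hG r w).support) :
    (tpath hG r v).length ≤ (tpath hG r w).length ∧
      ((tpath hG r v).length = (tpath hG r w).length → v = w) := by
  set p := tpath hG r w with hp
  have hq : (p.takeUntil v hm).IsPath := (tpath_isPath hG r w).takeUntil hm
  have he : p.takeUntil v hm = tpath hG r v := tpath_unique hG hq
  constructor
  · rw [← he]; exact p.length_takeUntil_le hm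
  · intro heq
    have hspec := congrArg Walk.length (p.take_spec hm)
    rw [Walk.length_append, he, heq] at hspec
    exact Walk.eq_of_length_eq_zero (p := p.dropUntil v hm) (by omega)

lemma keyEdge (hG : G.IsTree) (r : V) {u v : V} (h : G.Adj u v) :
    s(u, v) ∈ (tpath hG r u).edges ∨ s(u, v) ∈ (tpath hG r v).edges := by
  by_cases hv : v ∈ (tpath hG r u).support
  · left
    have h1 : (tpath hG r u).dropUntil v hv = tpath hG v u :=
      tpath_unique hG ((tpath_isPath hG r u).dropUntil hv)
    have h2 : Walk.cons h.symm Walk.nil = tpath hG v u :=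
      tpath_unique hG (by simp [Walk.cons_isPath_iff, h.ne'])
    have h3 : s(u, v) ∈ ((tpath hG r u).dropUntil v hv).edges := by
      rw [h1, ← h2]; simp [Sym2.eq_swap]
    exact (tpath hG r u).edges_dropUntil_subset hv h3
  · right
    have hcons : (Walk.cons h.symm (tpath hG r u).reverse).IsPath := by
      rw [Walk.cons_isPath_iff]
      exact ⟨(tpath_isPath hG r u).reverse,
        by simpa [Walk.support_reverse] using hv⟩
    have := tpath_unique hG hcons.reverse
    rw [← this]
    simp [Walk.edges_reverse, Sym2.eq_swap]

/-- In a path, the initial vertex is incident to at most one edge. -/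
lemma start_unique_edge {v w a b : V} {p : G.Walk v w} (hp : p.IsPath)
    (ha : s(v, a) ∈ p.edges) (hb : s(v, b) ∈ p.edges) : a = b := by
  cases p with
  | nil => simp at ha
  | @cons _ x _ hadj q =>
    rw [Walk.cons_isPath_iff] at hp
    have key : ∀ c, s(v, c) ∈ (Walk.cons hadj q).edges → c = x := by
      intro c hc
      rw [Walk.edges_cons, List.mem_cons] at hc
      rcases hc with hc | hc
      · exact Sym2.congr_right.mp hc
      · exact absurd (q.fst_mem_support_of_mem_edges hc) hp.2
    rw [key a ha, key b hb]

/-- In a path, the final vertex is incident to at most one edge. -/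
lemma end_unique_edge {r v a b : V} {p : G.Walk r v} (hp : p.IsPath)
    (ha : s(v, a) ∈ p.edges) (hb : s(v, b) ∈ p.edges) : a = b :=
  start_unique_edge hp.reverse
    (by rwa [Walk.edges_reverse, List.mem_reverse])
    (by rwa [Walk.edges_reverse, List.mem_reverse])

lemma sym2_rep (e : Sym2 V) : ∃ a b, e = s(a, b) :=
  Sym2.ind (fun a b => ⟨a, b, rfl⟩) e

/-- Endpoints of an edge in a subgraph's edge set are vertices of the subgraph. -/
lemma vert_of_mem_edgeSet {H : G.Subgraph} {e : Sym2 V} {a : V}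
    (he : e ∈ H.edgeSet) (ha : a ∈ e) : a ∈ H.verts := by
  obtain ⟨u, v, rfl⟩ := sym2_rep e
  rw [Subgraph.mem_edgeSet] at he
  rw [Sym2.mem_iff] at ha
  rcases ha with rfl | rfl
  · exact he.fst_mem
  · exact he.symm.fst_mem

/-- Every edge of the unique tree path between two vertices of a connected subgraph
belongs to the subgraph. -/
lemma tpath_edges_subset_subtree (hG : G.IsTree) {H : G.Subgraph} (hH : H.Connected)
    {a b : V} (ha : a ∈ H.verts) (hb : b ∈ H.verts) {e : Sym2 V}
    (he : e ∈ (tpath hG a b).edges) : e ∈ H.edgeSet := by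
  obtain ⟨-, hw⟩ := (Subgraph.connected_iff_forall_exists_walk_subgraph H).mp hH
  obtain ⟨p, hp⟩ := hw ha hb
  have h1 : e ∈ p.edges := edges_tpath_subset hG p he
  have h2 : e ∈ p.toSubgraph.edgeSet := by rwa [Walk.edgeSet_toSubgraph]
  exact Subgraph.edgeSet_mono hp h2

/-- A closed walk from `r` visiting all vertices of a list along tree paths. -/
noncomputable def spanW (hG : G.IsTree) (r : V) : List V → G.Walk r r
  | [] => Walk.nil
  | v :: l => ((tpath hG r v).append (tpath hG r v).reverse).append (spanW hG r l)

lemma mem_edges_spanW (hG : G.IsTree) (r : V) (l : List V) (e : Sym2 V) :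
    e ∈ (spanW hG r l).edges ↔ ∃ v ∈ l, e ∈ (tpath hG r v).edges := by
  induction l with
  | nil => simp [spanW]
  | cons v l ih =>
    simp only [spanW, Walk.edges_append, Walk.edges_reverse, List.mem_append,
      List.mem_reverse, ih, List.mem_cons]
    constructor
    · rintro ((h | h) | ⟨w, hw, hew⟩)
      · exact ⟨v, Or.inl rfl, h⟩
      · exact ⟨v, Or.inl rfl, h⟩
      · exact ⟨w, Or.inr hw, hew⟩
    · rintro ⟨w, (rfl | hw), hew⟩
      · exact Or.inl (Or.inl hew)
      · exact Or.inr ⟨w, hw, hew⟩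

/-- The set of endpoints of a set of edges. -/
def endSet (Y : Set (Sym2 V)) : Set V := {v | ∃ f ∈ Y, v ∈ f}

/-- The "span" of a set of edges: union of edges of tree paths from `r` to the endpoints. -/
def spanSet (hG : G.IsTree) (r : V) (Y : Set (Sym2 V)) : Set (Sym2 V) :=
  {e | ∃ v ∈ endSet Y, e ∈ (tpath hG r v).edges}

lemma spanSet_mem [Fintype V] (hG : G.IsTree) (r : V) (Y : Set (Sym2 V)) :
    spanSet hG r Y ∈ edgeShelling G := by
  have hfin : (endSet Y).Finite := Set.toFinite _
  refine Or.inr ⟨(spanW hG r hfin.toFinset.toList).toSubgraph,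
    Walk.toSubgraph_connected _, ?_⟩
  ext e
  rw [Walk.edgeSet_toSubgraph]
  simp only [Walk.mem_edgeSet, Set.mem_setOf_eq, mem_edges_spanW, Finset.mem_toList,
    Set.Finite.mem_toFinset, spanSet]

lemma spanSet_subset (hG : G.IsTree) (r : V) (Y : Set (Sym2 V)) :
    spanSet hG r Y ⊆ G.edgeSet := by
  rintro e ⟨v, -, hev⟩
  exact (tpath hG r v).edges_subset_edgeSet hev

lemma subset_spanSet (hG : G.IsTree) (r : V) {Y : Set (Sym2 V)}
    (hY : Y ⊆ G.edgeSet) : Y ⊆ spanSet hG r Y := by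
  intro e he
  obtain ⟨u, v, rfl⟩ := sym2_rep e
  have hadj : G.Adj u v := hY he
  rcases keyEdge hG r hadj with h | h
  · exact ⟨u, ⟨_, he, Sym2.mem_mk_left u v⟩, h⟩
  · exact ⟨v, ⟨_, he, Sym2.mem_mk_right u v⟩, h⟩

lemma closure_mono_mem {α : Type*} {K : Set (Set α)} {A Y : Set α}
    (hA : A ∈ K) (hYA : Y ⊆ A) : closureOp K Y ⊆ A :=
  Set.sInter_subset_of_mem ⟨hA, hYA⟩

lemma empty_mem : (∅ : Set (Sym2 V)) ∈ edgeShelling G := Or.inl rfl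

lemma closure_subset_spanSet [Fintype V] (hG : G.IsTree) (r : V) {Y : Set (Sym2 V)}
    (hY : Y ⊆ G.edgeSet) :
    closureOp (edgeShelling G) Y ⊆ spanSet hG r Y :=
  Set.sInter_subset_of_mem ⟨spanSet_mem hG r Y, subset_spanSet hG r hY⟩

lemma exists_extreme [Fintype V] (hG : G.IsTree) (r : V) {X : Set (Sym2 V)}
    (hX : X ⊆ G.edgeSet) (hne : X.Nonempty) :
    ∃ f ∈ X, f ∉ closureOp (edgeShelling G) (X \ {f}) := by
  have hfin : (endSet X).Finite := Set.toFinite _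
  have hens : (hfin.toFinset).Nonempty := by
    obtain ⟨e0, he0⟩ := hne
    obtain ⟨a, b, rfl⟩ := sym2_rep e0
    exact ⟨a, by rw [Set.Finite.mem_toFinset]; exact ⟨_, he0, Sym2.mem_mk_left a b⟩⟩
  obtain ⟨v, hvmem, hvmax⟩ :=
    hfin.toFinset.exists_max_image (fun v => (tpath hG r v).length) hens
  rw [Set.Finite.mem_toFinset] at hvmem
  have hmax : ∀ u ∈ endSet X, (tpath hG r u).length ≤ (tpath hG r v).length := by
    intro u hu
    exact hvmax u (by rwa [Set.Finite.mem_toFinset])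
  obtain ⟨f, hfX, hvf⟩ := hvmem
  -- every edge of X incident to v lies on the tree path from r to v
  have hinc : ∀ g ∈ X, ∀ u', g = s(v, u') → g ∈ (tpath hG r v).edges := by
    rintro g hg u' rfl
    have hadj : G.Adj v u' := hX hg
    rcases keyEdge hG r hadj with h | h
    · exact h
    · exfalso
      have hsupp : v ∈ (tpath hG r u').support :=
        (tpath hG r u').fst_mem_support_of_mem_edges h
      obtain ⟨hle, heq⟩ := length_le_of_mem_support hG hsupp
      have hle' : (tpath hG r u').length ≤ (tpath hG r v).length :=
        hmax u' ⟨_, hg, Sym2.mem_mk_right v u'⟩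
      exact hadj.ne (heq (le_antisymm hle hle'))
  obtain ⟨u, rfl⟩ := Sym2.mem_iff_exists.mp hvf
  refine ⟨s(v, u), hfX, fun hcl => ?_⟩
  have hsp : s(v, u) ∈ spanSet hG r (X \ {s(v, u)}) :=
    closure_subset_spanSet hG r (fun x hx => hX hx.1) hcl
  obtain ⟨w, ⟨g, hgmem, hwg⟩, hfw⟩ := hsp
  have hsupp : v ∈ (tpath hG r w).support :=
    (tpath hG r w).fst_mem_support_of_mem_edges hfw
  obtain ⟨hle, heq⟩ := length_le_of_mem_support hG hsupp
  have hle' : (tpath hG r w).length ≤ (tpath hG r v).length :=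
    hmax w ⟨g, hgmem.1, hwg⟩
  obtain rfl : v = w := heq (le_antisymm hle hle')
  obtain ⟨u', rfl⟩ := Sym2.mem_iff_exists.mp hwg
  have hg_edges : s(v, u') ∈ (tpath hG r v).edges := hinc _ hgmem.1 u' rfl
  have : u = u' := end_unique_edge (tpath_isPath hG r v) hfw hg_edges
  exact hgmem.2 (by rw [Set.mem_singleton_iff, this])

end TreeCG

theorem stmt7 {V : Type*} [Fintype V] [Nonempty V] (G : SimpleGraph V) (hG : G.IsTree) :
    IsConvexGeometry G.edgeSet (edgeShelling G) ∧
      ∀ (X : Set (Sym2 V)) (e : Sym2 V),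
        IsRootedCircuit G.edgeSet (edgeShelling G) X e → X.ncard = 2 := by
  classical
  obtain ⟨r0⟩ := ‹Nonempty V›
  have hsub : ∀ A ∈ edgeShelling G, A ⊆ G.edgeSet := by
    rintro A (rfl | ⟨H, -, rfl⟩)
    · exact Set.empty_subset _
    · exact H.edgeSet_subset
  have hgroundmem : G.edgeSet ∈ edgeShelling G := by
    by_cases hE : G.edgeSet = ∅
    · exact Or.inl hE
    · obtain ⟨e0, he0⟩ := Set.nonempty_iff_ne_empty.mpr hE
      obtain ⟨a, b, rfl⟩ := TreeCG.sym2_rep e0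
      have h : G.edgeSet = TreeCG.spanSet hG a G.edgeSet :=
        Set.Subset.antisymm (TreeCG.subset_spanSet hG a Set.Subset.rfl)
          (TreeCG.spanSet_subset hG a _)
      rw [h]; exact TreeCG.spanSet_mem hG a _
  have hinter : ∀ A ∈ edgeShelling G, ∀ B ∈ edgeShelling G, A ∩ B ∈ edgeShelling G := by
    intro A hA B hB
    by_cases hAB : A ∩ B = ∅
    · exact Or.inl hAB
    rcases hA with rfl | ⟨H1, hH1, rfl⟩
    · exact absurd (Set.empty_inter B) hAB
    rcases hB with rfl | ⟨H2, hH2, rfl⟩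
    · exact absurd (Set.inter_empty _) hAB
    obtain ⟨e0, he0⟩ := Set.nonempty_iff_ne_empty.mpr hAB
    obtain ⟨a, b, rfl⟩ := TreeCG.sym2_rep e0
    have ha1 : a ∈ H1.verts := TreeCG.vert_of_mem_edgeSet he0.1 (Sym2.mem_mk_left a b)
    have ha2 : a ∈ H2.verts := TreeCG.vert_of_mem_edgeSet he0.2 (Sym2.mem_mk_left a b)
    have hABsub : H1.edgeSet ∩ H2.edgeSet ⊆ G.edgeSet := fun x hx => H1.edgeSet_subset hx.1
    have heq : H1.edgeSet ∩ H2.edgeSet =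
        TreeCG.spanSet hG a (H1.edgeSet ∩ H2.edgeSet) := by
      refine Set.Subset.antisymm (TreeCG.subset_spanSet hG a hABsub) ?_
      rintro e ⟨w, ⟨g, hg, hwg⟩, hew⟩
      exact ⟨TreeCG.tpath_edges_subset_subtree hG hH1 ha1
          (TreeCG.vert_of_mem_edgeSet hg.1 hwg) hew,
        TreeCG.tpath_edges_subset_subtree hG hH2 ha2
          (TreeCG.vert_of_mem_edgeSet hg.2 hwg) hew⟩
    rw [heq]; exact TreeCG.spanSet_mem hG a _
  have hcirc : ∀ (X : Set (Sym2 V)) (e : Sym2 V),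
      IsRootedCircuit G.edgeSet (edgeShelling G) X e → X.ncard = 2 := by
    rintro X e ⟨hXE, heE, heX, hecl, hmin⟩
    have hXne : X.Nonempty := by
      rw [Set.nonempty_iff_ne_empty]
      rintro rfl
      exact Set.notMem_empty e
        (TreeCG.closure_mono_mem TreeCG.empty_mem Set.Subset.rfl hecl)
    obtain ⟨g0, hg0⟩ := hXne
    obtain ⟨r, r2, rfl⟩ := TreeCG.sym2_rep g0
    obtain ⟨w, ⟨f, hfX, hwf⟩, hew⟩ := TreeCG.closure_subset_spanSet hG r hXE hecl
    have hY : e ∈ closureOp (edgeShelling G) {s(r, r2), f} := by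
      refine Set.mem_sInter.mpr ?_
      rintro A ⟨hAK, hYA⟩
      rcases hAK with rfl | ⟨H, hconn, rfl⟩
      · exact absurd (hYA (Set.mem_insert _ _)) (Set.notMem_empty _)
      · exact TreeCG.tpath_edges_subset_subtree hG hconn
          (TreeCG.vert_of_mem_edgeSet (hYA (Set.mem_insert _ _)) (Sym2.mem_mk_left r r2))
          (TreeCG.vert_of_mem_edgeSet (hYA (Set.mem_insert_of_mem _ rfl)) hwf) hew
    have hXeq : {s(r, r2), f} = X := by
      refine hmin _ ?_ hY
      rintro x (rfl | rfl)
      · exact hg0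
      · exact hfX
    have hne2 : s(r, r2) ≠ f := by
      rintro rfl
      have hadj : G.Adj r r2 := hXE hg0
      rcases Sym2.mem_iff.mp hwf with rfl | rfl
      · rw [TreeCG.tpath_self] at hew; simp at hew
      · rw [TreeCG.tpath_adj hG hadj] at hew
        simp only [Walk.edges_cons, Walk.edges_nil, List.mem_singleton] at hew
        exact heX (hew ▸ hg0)
    rw [← hXeq, Set.ncard_pair hne2]
  refine ⟨⟨⟨hsub, hgroundmem, hinter⟩, ?_⟩, hcirc⟩
  intro X hXK hXne
  obtain ⟨f, hf1, hf2⟩ := TreeCG.exists_extreme hG r0 (hsub X hXK) hXne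
  exact ⟨f, hf1, hf2⟩
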